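/- Let S be an idempotent commutative semiring and M a pointed set. If elements {f_i} of the free S-module M⊗S generate an S-submodule N, then the module congruence B(N) generated by all bend relations of all elements of N equals the module congruence generated by the union of the B(f_i). -/
import Mathlib


/-- A module congruence on an `S`-module `N`: an equivalence relation closed under
addition and scalar multiplication. -/
def IsModCong (S N : Type*) [Semiring S] [AddCommMonoid N] [Module S N]
    (r : N → N → Prop) : Prop :=
  Equivalence r ∧ (∀ a b c d : N, r a b → r c d → r (a + c) (b + d)) ∧
    (∀ (s : S) (a b : N), r a b → r (s • a) (s • b))

/-- The module congruence generated by a set of pairs. -/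
def modCongGen (S N : Type*) [Semiring S] [AddCommMonoid N] [Module S N]
    (p : N → N → Prop) : N → N → Prop :=
  fun x y => ∀ r : N → N → Prop, IsModCong S N r → (∀ a b, p a b → r a b) → r x y

/-- The bend relations of `f ∈ M ⊗ S`. -/
def bendPairs {S M : Type*} [Zero S] (f : M →₀ S) : (M →₀ S) → (M →₀ S) → Prop :=
  fun x y => ∃ a ∈ f.support, x = f ∧ y = Finsupp.erase a f

lemma modCongGen_isModCong (S N : Type*) [Semiring S] [AddCommMonoid N] [Module S N]
    (p : N → N → Prop) : IsModCong S N (modCongGen S N p) := by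
  refine ⟨⟨fun x r hr _ => hr.1.refl x,
    fun h r hr hp => hr.1.symm (h r hr hp),
    fun h1 h2 r hr hp => hr.1.trans (h1 r hr hp) (h2 r hr hp)⟩,
    fun a b c d h1 h2 r hr hp => hr.2.1 a b c d (h1 r hr hp) (h2 r hr hp),
    fun s a b h r hr hp => hr.2.2 s a b (h r hr hp)⟩

/-- If elements `f i` generate a submodule `N` of the free module `M ⊗ S`, then the
bend congruence of `N` (generated by all bend relations of all elements of `N`)
equals the module congruence generated by the bend relations of the `f i`. -/
theorem stmt14 (S M ι : Type*) [CommSemiring S] (hidem : ∀ s : S, s + s = s)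
    (f : ι → (M →₀ S)) :
    modCongGen S (M →₀ S)
        (fun x y => ∃ g ∈ Submodule.span S (Set.range f), bendPairs g x y) =
      modCongGen S (M →₀ S) (fun x y => ∃ i : ι, bendPairs (f i) x y) := by
  set R := modCongGen S (M →₀ S) (fun x y => ∃ i : ι, bendPairs (f i) x y) with hR
  have hRmod := modCongGen_isModCong S (M →₀ S) (fun x y => ∃ i : ι, bendPairs (f i) x y)
  -- key: every element of the span satisfies its bend relations under R
  have key : ∀ g ∈ Submodule.span S (Set.range f), ∀ a ∈ g.support,
      R g (Finsupp.erase a g) := by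
    intro g hg
    induction hg using Submodule.span_induction with
    | mem x hx =>
      obtain ⟨i, rfl⟩ := hx
      intro a ha r hr hp
      exact hp _ _ ⟨i, a, ha, rfl, rfl⟩
    | zero => simp
    | add x y _ _ hx hy =>
      intro a ha
      have hx' : R x (Finsupp.erase a x) := by
        by_cases h : a ∈ x.support
        · exact hx a h
        · rw [Finsupp.erase_of_notMem_support h]; exact hRmod.1.refl x
      have hy' : R y (Finsupp.erase a y) := by
        by_cases h : a ∈ y.support
        · exact hy a h
        · rw [Finsupp.erase_of_notMem_support h]; exact hRmod.1.refl y
      rw [Finsupp.erase_add]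
      exact hRmod.2.1 _ _ _ _ hx' hy'
    | smul s x _ hx =>
      intro a ha
      have hax : a ∈ x.support := by
        simp only [Finsupp.mem_support_iff, Finsupp.smul_apply, smul_eq_mul] at ha ⊢
        exact fun h => ha (by rw [h, mul_zero])
      have : Finsupp.erase a (s • x) = s • Finsupp.erase a x := by
        ext b
        by_cases hb : b = a <;>
          simp [Finsupp.erase, hb]
      rw [this]
      exact hRmod.2.2 s _ _ (hx a hax)
  funext x y
  ext
  constructor
  · intro h
    exact h R hRmod (fun a b ⟨g, hg, c, hc, ha, hb⟩ => ha ▸ hb ▸ key g hg c hc)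
  · intro h r hr hp
    refine h r hr fun a b ⟨i, hb⟩ => hp a b ⟨f i, Submodule.subset_span ⟨i, rfl⟩, hb⟩
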